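/- arXiv:2512.05779 — 4 statements merged into one kernel-verified Lean document; each statement's English description precedes it below -/
import Mathlib

section
/- Let c > 0, L = c + 1/2 + sqrt(c + 1/4), and let (a_n) be a sequence of reals with a_0 > L and a_{n+1} = sqrt(a_n) + c for all n. Then for every n, 0 ≤ a_n ≤ a_0^(1/2^n) + L. -/
theorem iterated_radicals_bound (c : ℝ) (hc : 0 < c)
    (L : ℝ) (hL : L = c + 1/2 + Real.sqrt (c + 1/4))
    (a : ℕ → ℝ) (ha0 : a 0 > L)
    (ha : ∀ n, a (n + 1) = Real.sqrt (a n) + c) :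
    ∀ n, 0 ≤ a n ∧ a n ≤ a 0 ^ (1 / (2 : ℝ) ^ n) + L := by
  have hs : Real.sqrt (c + 1/4) ^ 2 = c + 1/4 := Real.sq_sqrt (by linarith)
  have hsnn : 0 ≤ Real.sqrt (c + 1/4) := Real.sqrt_nonneg _
  have hLc : L - c = 1/2 + Real.sqrt (c + 1/4) := by rw [hL]; ring
  have hLpos : 0 < L := by rw [hL]; linarith
  have hsqL : Real.sqrt L = L - c := by
    have h1 : (L - c)^2 = L := by rw [hLc, hL]; nlinarith
    have h2 : 0 ≤ L - c := by rw [hLc]; linarith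
    have h3 := Real.sqrt_sq h2
    rw [h1] at h3
    exact h3
  have ha0pos : 0 < a 0 := lt_trans hLpos ha0
  intro n
  induction n with
  | zero =>
    refine ⟨le_of_lt ha0pos, ?_⟩
    simp [Real.rpow_one]
    linarith [hLpos]
  | succ n ih =>
    obtain ⟨hnn, hub⟩ := ih
    constructor
    · rw [ha n]; positivity
    · rw [ha n]
      have hrnn : (0:ℝ) ≤ a 0 ^ (1 / (2:ℝ) ^ n) := Real.rpow_nonneg (le_of_lt ha0pos) _
      have h1 : Real.sqrt (a n) ≤ Real.sqrt (a 0 ^ (1 / (2:ℝ) ^ n) + L) :=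
        Real.sqrt_le_sqrt hub
      have h2 : Real.sqrt (a 0 ^ (1 / (2:ℝ) ^ n) + L) ≤
          Real.sqrt (a 0 ^ (1 / (2:ℝ) ^ n)) + Real.sqrt L := by
        have e1 := Real.sq_sqrt hrnn
        have e2 := Real.sq_sqrt hLpos.le
        have e3 := Real.sqrt_nonneg (a 0 ^ (1 / (2:ℝ) ^ n))
        have e4 := Real.sqrt_nonneg L
        have : a 0 ^ (1 / (2:ℝ) ^ n) + L ≤
            (Real.sqrt (a 0 ^ (1 / (2:ℝ) ^ n)) + Real.sqrt L)^2 := by nlinarith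
        calc Real.sqrt (a 0 ^ (1 / (2:ℝ) ^ n) + L)
            ≤ Real.sqrt ((Real.sqrt (a 0 ^ (1 / (2:ℝ) ^ n)) + Real.sqrt L)^2) :=
              Real.sqrt_le_sqrt this
          _ = _ := Real.sqrt_sq (by linarith)
      have h3 : Real.sqrt (a 0 ^ (1 / (2:ℝ) ^ n)) = a 0 ^ (1 / (2:ℝ) ^ (n+1)) := by
        rw [Real.sqrt_eq_rpow, ← Real.rpow_mul ha0pos.le]
        congr 1
        rw [pow_succ]
        ring
      rw [hsqL] at h2
      rw [h3] at h2
      linarith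
end

section
/- Let c > 0, L = c + 1/2 + sqrt(c + 1/4), and let (a_n) satisfy a_0 > L and a_{n+1} = sqrt(a_n) + c. Then a_n converges to L as n → ∞. -/
theorem iterated_radicals_tendsto (c : ℝ) (hc : 0 < c)
    (L : ℝ) (hL : L = c + 1/2 + Real.sqrt (c + 1/4))
    (a : ℕ → ℝ) (ha0 : a 0 > L)
    (ha : ∀ n, a (n + 1) = Real.sqrt (a n) + c) :
    Filter.Tendsto a Filter.atTop (nhds L) := by
  set s := Real.sqrt (c + 1/4) with hs
  have hs0 : 0 ≤ s := Real.sqrt_nonneg _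
  have hs2 : s ^ 2 = c + 1/4 := Real.sq_sqrt (by linarith)
  have hLpos : 0 < L := by nlinarith
  have hsqrtL : Real.sqrt L = s + 1/2 := by
    rw [show L = (s + 1/2)^2 by nlinarith]
    exact Real.sqrt_sq (by linarith)
  have key : ∀ x, L < x → L < Real.sqrt x + c ∧ Real.sqrt x + c < x := by
    intro x hx
    have ht : Real.sqrt L < Real.sqrt x := Real.sqrt_lt_sqrt hLpos.le hx
    rw [hsqrtL] at ht
    have hx2 : Real.sqrt x ^ 2 = x := Real.sq_sqrt (by linarith)
    constructor
    · nlinarith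
    · nlinarith [Real.sqrt_nonneg x]
  have hgt : ∀ n, L < a n := by
    intro n
    induction n with
    | zero => exact ha0
    | succ n ih => rw [ha n]; exact (key _ ih).1
  have hanti : Antitone a := by
    apply antitone_nat_of_succ_le
    intro n
    rw [ha n]
    exact ((key _ (hgt n)).2).le
  have hbdd : BddBelow (Set.range a) := ⟨L, by rintro _ ⟨n, rfl⟩; exact (hgt n).le⟩
  have hlim := tendsto_atTop_ciInf hanti hbdd
  set l := ⨅ n, a n with hldef
  have hlge : L ≤ l := le_ciInf fun n => (hgt n).le
  have hfix : l = Real.sqrt l + c := by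
    have h1 : Filter.Tendsto (fun n => a (n+1)) Filter.atTop (nhds l) :=
      hlim.comp (Filter.tendsto_add_atTop_nat 1)
    have h2 : Filter.Tendsto (fun n => Real.sqrt (a n) + c) Filter.atTop
        (nhds (Real.sqrt l + c)) :=
      ((Real.continuous_sqrt.tendsto l).comp hlim).add tendsto_const_nhds
    exact tendsto_nhds_unique (by simpa [ha] using h1) h2
  have hfinal : l = L := by
    by_contra h
    have hlt : L < l := lt_of_le_of_ne hlge (Ne.symm h)
    have := (key l hlt).2
    linarith [hfix]
  rwa [hfinal] at hlim
end

section
/- Let a_0 ≥ 2 be a real number and L = c + 1/2 + sqrt(c + 1/4) for c > 0. If n is a natural number with n ≥ log₂(log₂ a_0), then a_0^(1/2^n) ≤ 2, and hence the iterated-radical sequence satisfies a_n ≤ L + 2. -/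
theorem iterated_radicals_convergence_speed (c : ℝ) (hc : 0 < c)
    (L : ℝ) (hL : L = c + 1/2 + Real.sqrt (c + 1/4))
    (a : ℕ → ℝ) (ha0 : a 0 > max L 2)
    (ha : ∀ n, a (n + 1) = Real.sqrt (a n) + c)
    (n : ℕ) (hn : (n : ℝ) ≥ Real.logb 2 (Real.logb 2 (a 0))) :
    a 0 ^ (1 / (2 : ℝ) ^ n) ≤ 2 ∧ a n ≤ L + 2 := by
  have ha02 : (2:ℝ) < a 0 := lt_of_le_of_lt (le_max_right _ _) ha0
  have ha0pos : (0:ℝ) < a 0 := by linarith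
  have hsnn : 0 ≤ Real.sqrt (c + 1/4) := Real.sqrt_nonneg _
  have hLpos : 0 < L := by rw [hL]; linarith
  have hy : (1:ℝ) ≤ Real.logb 2 (a 0) := by
    have : Real.logb 2 2 ≤ Real.logb 2 (a 0) :=
      Real.logb_le_logb_of_le (by norm_num) (by norm_num) ha02.le
    simpa using this
  have hypos : 0 < Real.logb 2 (a 0) := lt_of_lt_of_le zero_lt_one hy
  have h2n : Real.logb 2 (a 0) ≤ (2:ℝ) ^ n := by
    calc Real.logb 2 (a 0)
        = (2:ℝ) ^ Real.logb 2 (Real.logb 2 (a 0)) :=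
          (Real.rpow_logb two_pos (by norm_num) hypos).symm
      _ ≤ (2:ℝ) ^ (n:ℝ) := Real.rpow_le_rpow_of_exponent_le one_le_two hn
      _ = (2:ℝ) ^ n := Real.rpow_natCast 2 n
  have hpowpos : (0:ℝ) < (2:ℝ) ^ n := by positivity
  have hpart1 : a 0 ^ (1 / (2:ℝ) ^ n) ≤ 2 := by
    have ha0eq : (2:ℝ) ^ Real.logb 2 (a 0) = a 0 :=
      Real.rpow_logb two_pos (by norm_num) ha0pos
    calc a 0 ^ (1 / (2:ℝ) ^ n)
        = ((2:ℝ) ^ Real.logb 2 (a 0)) ^ (1 / (2:ℝ) ^ n) := by rw [ha0eq]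
      _ = (2:ℝ) ^ (Real.logb 2 (a 0) * (1 / (2:ℝ) ^ n)) := by
          rw [← Real.rpow_mul (by norm_num)]
      _ ≤ (2:ℝ) ^ (1:ℝ) := by
          apply Real.rpow_le_rpow_of_exponent_le one_le_two
          rw [mul_one_div, div_le_one hpowpos]
          exact h2n
      _ = 2 := Real.rpow_one 2
  have hs2 : Real.sqrt (c + 1/4) ^ 2 = c + 1/4 := Real.sq_sqrt (by linarith)
  have hLc2 : (L - c)^2 = L := by rw [hL]; nlinarith [hs2]
  have hLcnn : 0 ≤ L - c := by rw [hL]; linarith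
  have hsqrtL : Real.sqrt L = L - c := by
    have h := Real.sqrt_sq hLcnn
    rw [hLc2] at h
    exact h
  have key : ∀ m, a m ≤ a 0 ^ (1 / (2:ℝ) ^ m) + L := by
    intro m
    induction m with
    | zero =>
        simp only [pow_zero]
        rw [div_one, Real.rpow_one]
        linarith
    | succ m ih =>
        rw [ha m]
        have hx : 0 ≤ a 0 ^ (1 / (2:ℝ) ^ m) := (Real.rpow_pos_of_pos ha0pos _).le
        have h1 : Real.sqrt (a m) ≤ Real.sqrt (a 0 ^ (1 / (2:ℝ) ^ m) + L) :=
          Real.sqrt_le_sqrt ih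
        set x := a 0 ^ (1 / (2:ℝ) ^ m) with hxdef
        have hsum : x + L ≤ (Real.sqrt x + Real.sqrt L)^2 := by
          nlinarith [Real.sq_sqrt hx, Real.sq_sqrt hLpos.le,
            Real.sqrt_nonneg x, Real.sqrt_nonneg L]
        have h2 : Real.sqrt (x + L) ≤ Real.sqrt x + Real.sqrt L := by
          calc Real.sqrt (x + L) ≤ Real.sqrt ((Real.sqrt x + Real.sqrt L)^2) :=
                Real.sqrt_le_sqrt hsum
            _ = Real.sqrt x + Real.sqrt L :=
                Real.sqrt_sq (by positivity)
        have h3 : Real.sqrt (a 0 ^ (1 / (2:ℝ) ^ m)) = a 0 ^ (1 / (2:ℝ) ^ (m+1)) := by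
          rw [Real.sqrt_eq_rpow, ← Real.rpow_mul ha0pos.le]
          congr 1
          rw [pow_succ]
          ring
        rw [h3] at h2
        rw [hsqrtL] at h2
        linarith
  exact ⟨hpart1, le_trans (key n) (by linarith)⟩
end

section
/- Let D be a 4-regular multigraph with vertex set V(D) and let K be a graph in which every vertex is incident to exactly one 'labeled' edge, the labels being in bijection with V(D), such that two vertices of K joined by an unlabeled edge carry labels that are adjacent or equal in D. If D has a tree decomposition of width w, then K has a tree decomposition of width at most 2(w+1) − 1, i.e., tw(K) + 1 ≤ 2(tw(D) + 1). -/
/-- `G` admits a tree decomposition all of whose bags have at most `w + 1` vertices. -/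
def HasTreeDecompositionOfWidthLE {V : Type} (G : SimpleGraph V) (w : ℕ) : Prop :=
  ∃ (ι : Type) (T : SimpleGraph ι) (B : ι → Finset V),
    T.IsTree ∧
    (∀ v : V, ∃ i, v ∈ B i) ∧
    (∀ u v : V, G.Adj u v → ∃ i, u ∈ B i ∧ v ∈ B i) ∧
    (∀ v : V, (T.induce {i | v ∈ B i}).Connected) ∧
    (∀ i, (B i).card ≤ w + 1)

/-- The treewidth of `G`: the least width of a tree decomposition of `G`. -/
noncomputable def treewidth {V : Type} (G : SimpleGraph V) : ℕ :=
  sInf {w | HasTreeDecompositionOfWidthLE G w}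

lemma trivial_td {V : Type} [Fintype V] (G : SimpleGraph V) :
    HasTreeDecompositionOfWidthLE G (Fintype.card V) := by
  refine ⟨Unit, ⊥, fun _ => Finset.univ, ⟨?_, SimpleGraph.isAcyclic_bot⟩, ?_, ?_, ?_, ?_⟩
  · exact SimpleGraph.Connected.mk
      (fun a b => by cases a; cases b; exact SimpleGraph.Reachable.refl _)
  · exact fun v => ⟨(), Finset.mem_univ v⟩
  · exact fun u v _ => ⟨(), Finset.mem_univ u, Finset.mem_univ v⟩
  · intro v
    haveI : Nonempty ({i : Unit | v ∈ (Finset.univ : Finset V)} : Set Unit) :=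
      ⟨⟨(), Finset.mem_univ v⟩⟩
    exact SimpleGraph.Connected.mk (fun a b => by
      have : a = b := Subsingleton.elim a b
      exact this ▸ SimpleGraph.Reachable.refl _)
  · exact fun _ => Nat.le_succ _

lemma treewidth_mem {V : Type} [Fintype V] (G : SimpleGraph V) :
    HasTreeDecompositionOfWidthLE G (treewidth G) :=
 by
  have h : Fintype.card V ∈ {w | HasTreeDecompositionOfWidthLE G w} := trivial_td G
  exact Nat.sInf_mem ⟨_, h⟩

theorem treewidth_kuperberg_network {VD VK : Type} [Fintype VD] [Fintype VK]
    (D : SimpleGraph VD) (K : SimpleGraph VK)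
    (m : VK → VK)            -- the perfect matching, as an involution
    (hm_invol : ∀ z, m (m z) = z)
    (hm_ne : ∀ z, m z ≠ z)
    (hm_adj : ∀ z, K.Adj z (m z))
    (ℓ : VK → VD)            -- label of the matching edge containing a vertex
    (hℓ_match : ∀ z, ℓ (m z) = ℓ z)
    (hℓ_surj : ∀ d : VD, ∃ z : VK, ℓ z = d)
    (hℓ_inj : ∀ z w : VK, ℓ z = ℓ w → w = z ∨ w = m z)
    (hedge : ∀ z w : VK, K.Adj z w → w ≠ m z → ℓ z = ℓ w ∨ D.Adj (ℓ z) (ℓ w)) :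
    treewidth K + 1 ≤ 2 * (treewidth D + 1) := by
  classical
  obtain ⟨ι, T, B, hT, hcov, hadj, hconn, hcard⟩ := treewidth_mem D
  set w := treewidth D
  -- fibers of ℓ have at most 2 elements
  have hfiber : ∀ d : VD, (Finset.univ.filter (fun z => ℓ z = d)).card ≤ 2 := by
    intro d
    obtain ⟨z, hz⟩ := hℓ_surj d
    have hsub : (Finset.univ.filter (fun x => ℓ x = d)) ⊆ {z, m z} := by
      intro x hx
      simp only [Finset.mem_filter, Finset.mem_univ, true_and] at hx
      have := hℓ_inj z x (by rw [hz, hx])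
      simp only [Finset.mem_insert, Finset.mem_singleton]
      tauto
    calc (Finset.univ.filter (fun x => ℓ x = d)).card ≤ ({z, m z} : Finset VK).card :=
          Finset.card_le_card hsub
      _ ≤ 2 := Finset.card_insert_le _ _ |>.trans (by simp)
  set B' : ι → Finset VK := fun i => Finset.univ.filter (fun z => ℓ z ∈ B i) with hB'
  have hmemB' : ∀ i z, z ∈ B' i ↔ ℓ z ∈ B i := by
    intro i z; simp [hB']
  have hK : HasTreeDecompositionOfWidthLE K (2 * w + 1) := by
    refine ⟨ι, T, B', hT, ?_, ?_, ?_, ?_⟩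
    · intro v
      obtain ⟨i, hi⟩ := hcov (ℓ v)
      exact ⟨i, (hmemB' i v).2 hi⟩
    · intro u v huv
      by_cases hv : v = m u
      · obtain ⟨i, hi⟩ := hcov (ℓ u)
        refine ⟨i, (hmemB' i u).2 hi, (hmemB' i v).2 ?_⟩
        rw [hv, hℓ_match]; exact hi
      · rcases hedge u v huv hv with h | h
        · obtain ⟨i, hi⟩ := hcov (ℓ u)
          exact ⟨i, (hmemB' i u).2 hi, (hmemB' i v).2 (h ▸ hi)⟩
        · obtain ⟨i, hi1, hi2⟩ := hadj _ _ h
          exact ⟨i, (hmemB' i u).2 hi1, (hmemB' i v).2 hi2⟩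
    · intro v
      have hset : {i | v ∈ B' i} = {i | ℓ v ∈ B i} := by
        ext i; exact hmemB' i v
      rw [hset]
      exact hconn (ℓ v)
    · intro i
      have hsub : B' i ⊆ (B i).biUnion (fun d => Finset.univ.filter (fun z => ℓ z = d)) := by
        intro z hz
        rw [hmemB'] at hz
        exact Finset.mem_biUnion.2 ⟨ℓ z, hz, by simp⟩
      calc (B' i).card ≤ ((B i).biUnion (fun d => Finset.univ.filter (fun z => ℓ z = d))).card :=
            Finset.card_le_card hsub
        _ ≤ ∑ d ∈ B i, (Finset.univ.filter (fun z => ℓ z = d)).card := Finset.card_biUnion_le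
        _ ≤ ∑ _d ∈ B i, 2 := Finset.sum_le_sum (fun d _ => hfiber d)
        _ = 2 * (B i).card := by rw [Finset.sum_const, smul_eq_mul, mul_comm]
        _ ≤ 2 * (w + 1) := Nat.mul_le_mul_left 2 (hcard i)
        _ = 2 * w + 1 + 1 := by ring
  have : treewidth K ≤ 2 * w + 1 := Nat.sInf_le hK
  omega
end
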